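/- Let q ≥ 2, m > 3, n = q^{2m} - 1, and suppose 1 ≤ x, y < n with x·y < q^{2m} - 1 - q^{m-1}, x having top nonzero q-ary digit at position k, and l = 2m - k - 1. If ((-x·q^l) mod n)·((-y·q^l) mod n) < q^{2m} - 1, then k = m - 1. -/

import Mathlib

set_option maxHeartbeats 800000 in
/-- Case ii) of Lemma 7: with l = 2m - k - 1, if the product of residues is less
than q^{2m} - 1 then k = m - 1. -/
theorem stmt_14 (q : ℤ) (hq : 2 ≤ q) (m : ℕ) (hm : 3 < m) (x y : ℤ) (k : ℕ)
    (hx1 : 1 ≤ x) (hxn : x < q ^ (2 * m) - 1) (hy1 : 1 ≤ y) (hyn : y < q ^ (2 * m) - 1)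
    (hxy : x * y < q ^ (2 * m) - 1 - q ^ (m - 1))
    (hxk : q ^ k ≤ x) (hxk' : x ≤ q ^ (k + 1) - 1) (hk : k ≤ (2 * m - 1) / 2)
    (hsmall : ((-x * q ^ (2 * m - k - 1)) % (q ^ (2 * m) - 1)) *
      ((-y * q ^ (2 * m - k - 1)) % (q ^ (2 * m) - 1)) < q ^ (2 * m) - 1) :
    k = m - 1 := by
  by_contra hne
  have hk2 : k + 2 ≤ m := by omega
  have hq1 : (1:ℤ) ≤ q := by linarith
  set l : ℕ := 2 * m - k - 1 with hl
  set n : ℤ := q ^ (2 * m) - 1 with hn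
  have hpow : q ^ l * q ^ (k + 1) = q ^ (2 * m) := by
    rw [← pow_add]; congr 1; omega
  have hql1 : (1:ℤ) ≤ q ^ l := one_le_pow₀ hq1
  have hqk1 : (1:ℤ) ≤ q ^ (k + 1) := one_le_pow₀ hq1
  have hqlk : q ^ (k + 1) ≤ q ^ l := pow_le_pow_right₀ hq1 (by omega)
  have hq2m2_1 : (1:ℤ) ≤ q ^ (2 * m - 2) := one_le_pow₀ hq1
  have hq2m1_1 : (1:ℤ) ≤ q ^ (2 * m - 1) := one_le_pow₀ hq1
  have hq2m1 : q ^ (2 * m - 1) * q = q ^ (2 * m) := by rw [← pow_succ]; congr 1; omega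
  have hq2m2 : q ^ (2 * m - 2) * q = q ^ (2 * m - 1) := by rw [← pow_succ]; congr 1; omega
  have h2q : 2 * q ^ (2 * m - 1) ≤ q ^ (2 * m) := by nlinarith
  have h2q' : 2 * q ^ (2 * m - 2) ≤ q ^ (2 * m - 1) := by nlinarith
  have hn0 : 0 < n := by rw [hn]; nlinarith
  -- the x-residue is exactly n - x*q^l
  have hxub : x * q ^ l ≤ q ^ (2 * m) - q ^ l := by
    have h := mul_le_mul_of_nonneg_right hxk' (by linarith : (0:ℤ) ≤ q ^ l)
    have h2 : (q ^ (k + 1) - 1) * q ^ l = q ^ (2 * m) - q ^ l := by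
      rw [sub_mul, one_mul, mul_comm, hpow]
    linarith
  have hxlb : q ^ l ≤ x * q ^ l := by
    have := mul_le_mul_of_nonneg_right hx1 (by linarith : (0:ℤ) ≤ q ^ l)
    linarith
  have hA : (-x * q ^ l) % n = n - x * q ^ l := by
    have h1 : (-x * q ^ l) % n = (n - x * q ^ l) % n := by
      conv_lhs => rw [show -x * q ^ l = (n - x * q ^ l) + (-1) * n by ring]
      rw [Int.add_mul_emod_self_right]
    rw [h1, Int.emod_eq_of_lt (by rw [hn]; linarith) (by linarith)]
  rw [hA] at hsmall
  set B : ℤ := (-y * q ^ l) % n with hB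
  have hB0 : 0 ≤ B := Int.emod_nonneg _ (by linarith)
  obtain ⟨c, hc⟩ : ∃ c, -y * q ^ l = n * c + B :=
    ⟨(-y * q ^ l) / n, by rw [hB]; exact (Int.mul_ediv_add_emod _ _).symm⟩
  -- B ≤ q^(k+1)
  have hBle : B ≤ q ^ (k + 1) := by
    by_contra h
    push_neg at h
    have h1 : (q ^ l - 1) * B ≤ (n - x * q ^ l) * B :=
      mul_le_mul_of_nonneg_right (by rw [hn]; linarith) hB0
    have h2 : (q ^ l - 1) * (q ^ (k + 1) + 1) ≤ (q ^ l - 1) * B :=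
      mul_le_mul_of_nonneg_left (by linarith) (by linarith)
    have h3 : (q ^ l - 1) * (q ^ (k + 1) + 1) = q ^ (2 * m) + q ^ l - q ^ (k + 1) - 1 := by
      rw [← hpow]; ring
    rw [hn] at hsmall h1
    linarith
  -- bound B * q^(k+1)
  have hpow2 : q ^ (k + 1) * q ^ (k + 1) ≤ q ^ (2 * m - 2) := by
    rw [← pow_add]; exact pow_le_pow_right₀ hq1 (by omega)
  have hBq : B * q ^ (k + 1) ≤ q ^ (2 * m - 2) := by
    have := mul_le_mul_of_nonneg_right hBle (by linarith : (0:ℤ) ≤ q ^ (k + 1))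
    linarith
  have hBqnn : 0 ≤ B * q ^ (k + 1) := mul_nonneg hB0 (by linarith)
  -- y = n - B * q^(k+1)
  have hnp1 : q ^ l * q ^ (k + 1) = n + 1 := by rw [hpow, hn]; ring
  have hd : y + B * q ^ (k + 1) = n * (-(y + c * q ^ (k + 1))) := by
    linear_combination (-(q ^ (k + 1))) * hc - y * hnp1
  have hsum_pos : 0 < y + B * q ^ (k + 1) := by linarith
  have hsum_lt : y + B * q ^ (k + 1) < 2 * n := by rw [hn]; linarith
  have he : -(y + c * q ^ (k + 1)) = 1 := by
    set e : ℤ := -(y + c * q ^ (k + 1)) with hee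
    rcases lt_trichotomy e 1 with h | h | h
    · have he0 : e ≤ 0 := by omega
      have hnp : n * e ≤ 0 := mul_nonpos_of_nonneg_of_nonpos (le_of_lt hn0) he0
      rw [← hd] at hnp; linarith
    · exact h
    · have he2 : 2 ≤ e := by omega
      have hnp : n * 2 ≤ n * e := mul_le_mul_of_nonneg_left he2 (le_of_lt hn0)
      rw [← hd] at hnp; linarith
  rw [he, mul_one] at hd
  have hyeq : y = n - B * q ^ (k + 1) := by linarith
  have hqm1 : (0:ℤ) ≤ q ^ (m - 1) := by positivity
  -- x = 1
  have hx2 : x = 1 := by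
    by_contra hx2'
    have hx2 : 2 ≤ x := by omega
    have h5 : x * y = x * n - x * (B * q ^ (k + 1)) := by rw [hyeq]; ring
    have h6 : x * n - x * (B * q ^ (k + 1)) < n := by
      rw [← h5]; rw [hn] at hxy ⊢; linarith
    have h7 : x * (B * q ^ (k + 1)) ≤ x * q ^ (2 * m - 2) :=
      mul_le_mul_of_nonneg_left hBq (by linarith)
    have h8 : x * q ^ (2 * m - 2) ≤ 2 * (x - 1) * q ^ (2 * m - 2) :=
      mul_le_mul_of_nonneg_right (by linarith) (by linarith)
    have h9 : (x - 1) * n < 2 * (x - 1) * q ^ (2 * m - 2) := by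
      have : (x - 1) * n = x * n - n := by ring
      linarith
    have h10 : n < 2 * q ^ (2 * m - 2) := by
      by_contra h10'
      push_neg at h10'
      have := mul_le_mul_of_nonneg_left h10' (by linarith : (0:ℤ) ≤ x - 1)
      have hexp : (x - 1) * (2 * q ^ (2 * m - 2)) = 2 * (x - 1) * q ^ (2 * m - 2) := by ring
      linarith
    rw [hn] at h10
    linarith
  -- then k = 0
  have hk0 : k = 0 := by
    by_contra hk0'
    have h1k : 1 ≤ k := by omega
    have : q ^ 1 ≤ q ^ k := pow_le_pow_right₀ hq1 h1k
    rw [pow_one] at this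
    linarith
  -- final contradiction
  rw [hk0] at hBle hyeq
  rw [pow_one] at hBle
  have hBq2 : B * q ^ (0 + 1) ≤ q * q := by
    rw [pow_one]
    exact mul_le_mul_of_nonneg_right hBle (by linarith)
  have hq2m1' : q * q ≤ q ^ (m - 1) := by
    have : q ^ 2 ≤ q ^ (m - 1) := pow_le_pow_right₀ hq1 (by omega)
    rw [pow_two] at this; linarith
  rw [hx2, one_mul] at hxy
  rw [hn] at hyeq
  linarith
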